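/- arXiv:2406.14857 — 3 statements merged into one kernel-verified Lean document; each statement's English description precedes it below -/
import Mathlib

section
/- For every N ≥ 2 and every t ∈ [0,1], the derivative of the interpolating quenched free energy of the chain satisfies (d/dt) f_N^chain(t) = -(βN)^{-1} Σ_{i=1}^{N} E[ log( ⟨e^{β J_i σ_i σ_{i+1}}⟩_{H_{\i}(t)} / ⟨e^{β(ĥ_{i,1}σ_i + ĥ_{i,2}σ_{i+1})}⟩_{H_{\i}(t)} ) ], where H_{\i}(t) is the interpolating Hamiltonian with the i-th interpolated bond term removed (it contains neither J_i, ĥ_{i,1}, ĥ_{i,2} nor M_i) and ⟨·⟩_{H_{\i}(t)} denotes the Gibbs thermal average with respect to H_{\i}(t) at inverse temperature β. -/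
open MeasureTheory Real Filter

/-- Spin value of a Boolean spin variable: `true ↦ 1`, `false ↦ -1`. -/
noncomputable def spin (b : Bool) : ℝ := if b then 1 else -1

/-- Cyclic successor on `Fin N`. -/
def nxt {N : ℕ} (i : Fin N) : Fin N := ⟨(i.val + 1) % N, Nat.mod_lt _ i.pos⟩

/-- Inverse hyperbolic tangent. -/
noncomputable def artanh (x : ℝ) : ℝ := Real.log ((1 + x) / (1 - x)) / 2

/-- Partition function of the one-dimensional chain Ising spin glass with periodic
boundary conditions, at inverse temperature `β`, with couplings `J` and fields `H`. -/
noncomputable def chainZ (N : ℕ) (β : ℝ) (J H : Fin N → ℝ) : ℝ :=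
  ∑ σ : Fin N → Bool,
    Real.exp (β * ((∑ i : Fin N, J i * spin (σ i) * spin (σ (nxt i))) +
      ∑ i : Fin N, H i * spin (σ i)))

/-- Quenched free energy density `f_N^chain` of the chain, with i.i.d. couplings of law `μJ`
and i.i.d. fields of law `μH`. -/
noncomputable def chainF (β : ℝ) (μJ μH : Measure ℝ) (N : ℕ) : ℝ :=
  -(1 / (β * N)) * ∫ ω : (Fin N → ℝ) × (Fin N → ℝ),
    Real.log (chainZ N β ω.1 ω.2) ∂((Measure.pi fun _ : Fin N => μJ).prod
      (Measure.pi fun _ : Fin N => μH))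

/-- The replica symmetric cavity free energy `f_RS^chain`; the coordinates are
`ω.1 = J`, `ω.2.1 = H`, `ω.2.2 = ĥ`. -/
noncomputable def chainRS (β : ℝ) (μJ μH μh : Measure ℝ) : ℝ :=
  -(1 / β) * ∫ ω : ℝ × ℝ × ℝ,
    Real.log (2 * Real.cosh (β * ω.1) * Real.cosh (β * (ω.2.2 + ω.2.1)) /
      Real.cosh (β * ω.2.2)) ∂(μJ.prod (μH.prod μh))

/-- `μh` is a chain cavity measure for `(β, μJ, μH)`: if `J ~ μJ`, `H ~ μH`, `ĥ' ~ μh` are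
independent then `(1/β)·artanh(tanh(βJ)·tanh(β(H+ĥ')))` again has law `μh`. -/
def IsChainCavity (β : ℝ) (μJ μH μh : Measure ℝ) : Prop :=
  Measure.map (fun ω : ℝ × ℝ × ℝ =>
    (1 / β) * _root_.artanh (Real.tanh (β * ω.1) * Real.tanh (β * (ω.2.1 + ω.2.2))))
    (μJ.prod (μH.prod μh)) = μh

/-- Bernoulli weight of an outcome `m : Bool` for a Bernoulli variable with mean `t`. -/
noncomputable def bern (t : ℝ) (m : Bool) : ℝ := if m then t else 1 - t

/-- Partition function of the interpolating chain Hamiltonian for a fixed realization of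
the couplings `J`, fields `H`, cavity fields `h1, h2` and dilution variables `m`:
an active bond (`m i = true`) carries the interaction `J_i σ_i σ_{i+1}`, while an inactive
bond carries the cavity fields `ĥ_{i,1} σ_i + ĥ_{i,2} σ_{i+1}`. -/
noncomputable def chainZt (N : ℕ) (β : ℝ) (J H h1 h2 : Fin N → ℝ) (m : Fin N → Bool) : ℝ :=
  ∑ σ : Fin N → Bool,
    Real.exp (β * ((∑ i : Fin N,
      (if m i then J i * spin (σ i) * spin (σ (nxt i))
        else h1 i * spin (σ i) + h2 i * spin (σ (nxt i)))) +
      ∑ i : Fin N, H i * spin (σ i)))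

/-- Interpolating quenched free energy `f_N^chain(t)` of the chain: the expectation over
the i.i.d. Bernoulli dilution variables `M_i` with mean `t` is written as a weighted sum,
and the expectation over `J, H, ĥ_{·,1}, ĥ_{·,2}` as an integral with respect to the
product measure (coordinates `ω.1 = J`, `ω.2.1 = H`, `ω.2.2.1 = ĥ_{·,1}`,
`ω.2.2.2 = ĥ_{·,2}`). -/
noncomputable def chainFt (β : ℝ) (μJ μH μh : Measure ℝ) (N : ℕ) (t : ℝ) : ℝ :=
  -(1 / (β * N)) * ∫ ω : (Fin N → ℝ) × (Fin N → ℝ) × (Fin N → ℝ) × (Fin N → ℝ),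
    ∑ m : Fin N → Bool, (∏ i : Fin N, bern t (m i)) *
      Real.log (chainZt N β ω.1 ω.2.1 ω.2.2.1 ω.2.2.2 m)
    ∂((Measure.pi fun _ : Fin N => μJ).prod ((Measure.pi fun _ : Fin N => μH).prod
      ((Measure.pi fun _ : Fin N => μh).prod (Measure.pi fun _ : Fin N => μh))))

/-- Weighted sum `∑_σ g(σ) e^{-β H_{\i}(t)(σ)}` for the interpolating chain Hamiltonian
with the `i`-th interpolated bond term removed (it contains neither `J_i`, `ĥ_{i,1}`,
`ĥ_{i,2}` nor `M_i`). -/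
noncomputable def chainCutW (N : ℕ) (β : ℝ) (J H h1 h2 : Fin N → ℝ) (m : Fin N → Bool)
    (i : Fin N) (g : (Fin N → Bool) → ℝ) : ℝ :=
  ∑ σ : Fin N → Bool, g σ *
    Real.exp (β * ((∑ j ∈ Finset.univ.erase i,
      (if m j then J j * spin (σ j) * spin (σ (nxt j))
        else h1 j * spin (σ j) + h2 j * spin (σ (nxt j)))) +
      ∑ j : Fin N, H j * spin (σ j)))

/-- Gibbs thermal average `⟨g⟩_{H_{\i}(t)}` with respect to the interpolating chain
Hamiltonian with the `i`-th interpolated bond term removed. -/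
noncomputable def chainCutAvg (N : ℕ) (β : ℝ) (J H h1 h2 : Fin N → ℝ) (m : Fin N → Bool)
    (i : Fin N) (g : (Fin N → Bool) → ℝ) : ℝ :=
  chainCutW N β J H h1 h2 m i g / chainCutW N β J H h1 h2 m i (fun _ => 1)


/-! ### Auxiliary lemmas -/

section Aux

open Finset Function

lemma abs_spin (b : Bool) : |spin b| = 1 := by cases b <;> simp [spin]

lemma chainZt_pos {N : ℕ} (β : ℝ) (J H h1 h2 : Fin N → ℝ) (m : Fin N → Bool) :
    0 < chainZt N β J H h1 h2 m :=
  Finset.sum_pos (fun σ _ => Real.exp_pos _) Finset.univ_nonempty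

lemma chainCutW_one_pos {N : ℕ} (β : ℝ) (J H h1 h2 : Fin N → ℝ) (m : Fin N → Bool)
    (i : Fin N) : 0 < chainCutW N β J H h1 h2 m i (fun _ => 1) :=
  Finset.sum_pos (fun σ _ => by simpa using Real.exp_pos _) Finset.univ_nonempty

lemma chainCutW_true {N : ℕ} (β : ℝ) (J H h1 h2 : Fin N → ℝ) (m : Fin N → Bool) (i : Fin N) :
    chainCutW N β J H h1 h2 m i
      (fun σ => Real.exp (β * (J i * spin (σ i) * spin (σ (nxt i))))) =
    chainZt N β J H h1 h2 (Function.update m i true) := by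
  classical
  unfold chainCutW chainZt
  refine Finset.sum_congr rfl fun σ _ => ?_
  rw [← Real.exp_add]
  congr 1
  have h' : (∑ j : Fin N, (if Function.update m i true j
        then J j * spin (σ j) * spin (σ (nxt j))
        else h1 j * spin (σ j) + h2 j * spin (σ (nxt j))))
      = (J i * spin (σ i) * spin (σ (nxt i))) + ∑ j ∈ Finset.univ.erase i,
        (if m j then J j * spin (σ j) * spin (σ (nxt j))
          else h1 j * spin (σ j) + h2 j * spin (σ (nxt j))) := by
    rw [← Finset.add_sum_erase _ _ (Finset.mem_univ i)]
    congr 1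
    · simp
    · exact Finset.sum_congr rfl fun j hj => by
        rw [Function.update_of_ne (Finset.ne_of_mem_erase hj)]
  rw [h']; ring

lemma chainCutW_false {N : ℕ} (β : ℝ) (J H h1 h2 : Fin N → ℝ) (m : Fin N → Bool) (i : Fin N) :
    chainCutW N β J H h1 h2 m i
      (fun σ => Real.exp (β * (h1 i * spin (σ i) + h2 i * spin (σ (nxt i))))) =
    chainZt N β J H h1 h2 (Function.update m i false) := by
  classical
  unfold chainCutW chainZt
  refine Finset.sum_congr rfl fun σ _ => ?_
  rw [← Real.exp_add]
  congr 1
  have h' : (∑ j : Fin N, (if Function.update m i false j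
        then J j * spin (σ j) * spin (σ (nxt j))
        else h1 j * spin (σ j) + h2 j * spin (σ (nxt j))))
      = (h1 i * spin (σ i) + h2 i * spin (σ (nxt i))) + ∑ j ∈ Finset.univ.erase i,
        (if m j then J j * spin (σ j) * spin (σ (nxt j))
          else h1 j * spin (σ j) + h2 j * spin (σ (nxt j))) := by
    rw [← Finset.add_sum_erase _ _ (Finset.mem_univ i)]
    congr 1
    · simp
    · exact Finset.sum_congr rfl fun j hj => by
        rw [Function.update_of_ne (Finset.ne_of_mem_erase hj)]
  rw [h']; ring

lemma log_cut_ratio {N : ℕ} (β : ℝ) (J H h1 h2 : Fin N → ℝ) (m : Fin N → Bool) (i : Fin N) :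
    Real.log (chainCutAvg N β J H h1 h2 m i
        (fun σ => Real.exp (β * (J i * spin (σ i) * spin (σ (nxt i))))) /
      chainCutAvg N β J H h1 h2 m i
        (fun σ => Real.exp (β * (h1 i * spin (σ i) + h2 i * spin (σ (nxt i)))))) =
    Real.log (chainZt N β J H h1 h2 (Function.update m i true)) -
      Real.log (chainZt N β J H h1 h2 (Function.update m i false)) := by
  classical
  have hW1 := chainCutW_one_pos β J H h1 h2 m i
  have hT := chainCutW_true β J H h1 h2 m i
  have hF := chainCutW_false β J H h1 h2 m i
  have hZT := chainZt_pos β J H h1 h2 (Function.update m i true)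
  have hZF := chainZt_pos β J H h1 h2 (Function.update m i false)
  unfold chainCutAvg
  rw [hT, hF]
  have hdiv : ∀ a b c : ℝ, c ≠ 0 → b ≠ 0 → (a / c) / (b / c) = a / b := by
    intro a b c hc hb; field_simp
  rw [hdiv _ _ _ hW1.ne' hZF.ne', Real.log_div hZT.ne' hZF.ne']

lemma hasDerivAt_bern (b : Bool) (t : ℝ) :
    HasDerivAt (fun s => bern s b) (if b then (1:ℝ) else -1) t := by
  cases b
  · simpa [bern] using (hasDerivAt_id t).const_sub 1
  · simpa [bern] using hasDerivAt_id' (x := t)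

lemma sum_bern_update {N : ℕ} (t : ℝ) (i : Fin N) (f : (Fin N → Bool) → ℝ) :
    ∑ m : Fin N → Bool,
        ((∏ j ∈ Finset.univ.erase i, bern t (m j)) * (if m i then (1:ℝ) else -1)) * f m =
    ∑ m : Fin N → Bool, (∏ j, bern t (m j)) *
      (f (Function.update m i true) - f (Function.update m i false)) := by
  classical
  rw [← sub_eq_zero, ← Finset.sum_sub_distrib]
  refine Finset.sum_involution (fun m _ => Function.update m i (!(m i))) ?_ ?_
    (fun _ _ => Finset.mem_univ _) ?_
  · intro m _
    have hPe : ∀ b, (∏ j ∈ Finset.univ.erase i, bern t ((Function.update m i b) j))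
        = ∏ j ∈ Finset.univ.erase i, bern t (m j) := fun b =>
      Finset.prod_congr rfl fun j hj => by
        rw [Function.update_of_ne (Finset.ne_of_mem_erase hj)]
    have hPu : ∀ b, (∏ j, bern t ((Function.update m i b) j))
        = bern t b * ∏ j ∈ Finset.univ.erase i, bern t (m j) := fun b => by
      rw [← Finset.mul_prod_erase _ _ (Finset.mem_univ i), Function.update_self, hPe]
    have hPm : (∏ j, bern t (m j)) = bern t (m i) * ∏ j ∈ Finset.univ.erase i, bern t (m j) :=
      (Finset.mul_prod_erase _ _ (Finset.mem_univ i)).symm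
    cases hmi : m i
    · have hm : Function.update m i false = m := by
        rw [show false = m i from hmi.symm]; exact Function.update_eq_self i m
      simp only [hmi, Bool.not_false]
      rw [hPm, hmi, Function.update_idem, Function.update_idem, hPu true, hPe true,
        Function.update_self, hm]
      simp only [bern, if_true, if_false, Bool.false_eq_true]
      ring
    · have hm : Function.update m i true = m := by
        rw [show true = m i from hmi.symm]; exact Function.update_eq_self i m
      simp only [hmi, Bool.not_true]
      rw [hPm, hmi, Function.update_idem, Function.update_idem, hPu false, hPe false,
        Function.update_self, hm]
      simp only [bern, if_true, if_false, Bool.false_eq_true]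
      ring
  · intro m _ _ h
    have := congrFun h i
    simp only [Function.update_self] at this
    exact (Bool.not_ne_self (m i)) this
  · intro m _
    simp only [Function.update_self, Bool.not_not, Function.update_idem,
      Function.update_eq_self]

lemma measurePreserving_eval_pi {α : Type*} [MeasurableSpace α] (μ : Measure α)
    [IsProbabilityMeasure μ] {N : ℕ} (i : Fin N) :
    MeasurePreserving (Function.eval i) (Measure.pi fun _ : Fin N => μ) μ := by
  classical
  refine ⟨measurable_pi_apply i, ?_⟩
  ext s hs
  rw [Measure.map_apply (measurable_pi_apply i) hs, Set.eval_preimage, Measure.pi_pi]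
  rw [Fintype.prod_eq_single i (fun j hj => by simp [Function.update_of_ne hj])]
  simp

set_option maxHeartbeats 1000000 in
lemma abs_log_chainZt_le {N : ℕ} (β : ℝ) (hβ : 0 ≤ β) (J H h1 h2 : Fin N → ℝ)
    (m : Fin N → Bool) :
    |Real.log (chainZt N β J H h1 h2 m)| ≤
      Real.log (Fintype.card (Fin N → Bool) : ℝ) +
        β * ∑ i, (|J i| + |H i| + |h1 i| + |h2 i|) := by
  classical
  set Bv := ∑ i, (|J i| + |H i| + |h1 i| + |h2 i|) with hBvdef
  have hBv0 : 0 ≤ Bv := Finset.sum_nonneg fun i _ => by positivity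
  have hE : ∀ σ : Fin N → Bool,
      |(∑ i, (if m i then J i * spin (σ i) * spin (σ (nxt i))
        else h1 i * spin (σ i) + h2 i * spin (σ (nxt i)))) + ∑ i, H i * spin (σ i)| ≤ Bv := by
    intro σ
    refine le_trans (abs_add_le _ _) ?_
    refine le_trans (add_le_add (Finset.abs_sum_le_sum_abs _ _)
      (Finset.abs_sum_le_sum_abs _ _)) ?_
    rw [← Finset.sum_add_distrib]
    refine Finset.sum_le_sum fun i _ => ?_
    have hH' : |H i * spin (σ i)| = |H i| := by
      rw [abs_mul, abs_spin, mul_one]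
    have hterm : |if m i then J i * spin (σ i) * spin (σ (nxt i))
        else h1 i * spin (σ i) + h2 i * spin (σ (nxt i))| ≤ |J i| + |h1 i| + |h2 i| := by
      cases hmi : m i
      · simp only [hmi, Bool.false_eq_true, if_false]
        refine le_trans (abs_add_le _ _) ?_
        rw [abs_mul, abs_mul, abs_spin, abs_spin, mul_one, mul_one]
        have := abs_nonneg (J i); linarith
      · simp only [hmi, if_true]
        rw [abs_mul, abs_mul, abs_spin, abs_spin, mul_one, mul_one]
        have := abs_nonneg (h1 i); have := abs_nonneg (h2 i); linarith
    rw [hH']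
    linarith
  have hK1 : (1:ℝ) ≤ (Fintype.card (Fin N → Bool) : ℝ) := by
    exact_mod_cast Fintype.card_pos
  have hK0 : (0:ℝ) < (Fintype.card (Fin N → Bool) : ℝ) := lt_of_lt_of_le one_pos hK1
  have hlogK : 0 ≤ Real.log (Fintype.card (Fin N → Bool) : ℝ) := Real.log_nonneg hK1
  have hpos := chainZt_pos β J H h1 h2 m
  have hupper : chainZt N β J H h1 h2 m ≤
      (Fintype.card (Fin N → Bool) : ℝ) * Real.exp (β * Bv) := by
    unfold chainZt
    calc (∑ σ : Fin N → Bool, Real.exp (β * ((∑ i, (if m i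
            then J i * spin (σ i) * spin (σ (nxt i))
            else h1 i * spin (σ i) + h2 i * spin (σ (nxt i)))) + ∑ i, H i * spin (σ i))))
        ≤ ∑ _σ : Fin N → Bool, Real.exp (β * Bv) := by
          refine Finset.sum_le_sum fun σ _ => Real.exp_le_exp.2 ?_
          exact mul_le_mul_of_nonneg_left ((le_abs_self _).trans (hE σ)) hβ
      _ = (Fintype.card (Fin N → Bool) : ℝ) * Real.exp (β * Bv) := by
          rw [Finset.sum_const, Finset.card_univ, nsmul_eq_mul]
  have hlower : Real.exp (-(β * Bv)) ≤ chainZt N β J H h1 h2 m := by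
    set σ0 : Fin N → Bool := fun _ => true with hσ0
    have h1' : Real.exp (β * ((∑ i, (if m i then J i * spin (σ0 i) * spin (σ0 (nxt i))
        else h1 i * spin (σ0 i) + h2 i * spin (σ0 (nxt i)))) + ∑ i, H i * spin (σ0 i)))
        ≤ chainZt N β J H h1 h2 m := by
      unfold chainZt
      exact Finset.single_le_sum (f := fun σ : Fin N → Bool => Real.exp (β *
        ((∑ i, (if m i then J i * spin (σ i) * spin (σ (nxt i))
          else h1 i * spin (σ i) + h2 i * spin (σ (nxt i)))) + ∑ i, H i * spin (σ i))))
        (fun σ _ => (Real.exp_pos _).le) (Finset.mem_univ σ0)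
    refine le_trans (Real.exp_le_exp.2 ?_) h1'
    have hge := mul_le_mul_of_nonneg_left (neg_le_of_abs_le (hE σ0)) hβ
    rw [mul_neg] at hge
    exact hge
  rw [abs_le]
  constructor
  · have : -(β * Bv) ≤ Real.log (chainZt N β J H h1 h2 m) := by
      have := Real.log_le_log (Real.exp_pos _) hlower
      rwa [Real.log_exp] at this
    have hb : 0 ≤ β * Bv := mul_nonneg hβ hBv0
    linarith
  · have := Real.log_le_log hpos hupper
    rwa [Real.log_mul hK0.ne' (Real.exp_pos _).ne', Real.log_exp] at this

set_option maxHeartbeats 1000000 in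
lemma integrable_log_chainZt {N : ℕ} (β : ℝ) (hβ : 0 ≤ β) (μJ μH μh : Measure ℝ)
    [IsProbabilityMeasure μJ] [IsProbabilityMeasure μH] [IsProbabilityMeasure μh]
    (hJ : Integrable (fun x : ℝ => x) μJ) (hH : Integrable (fun x : ℝ => x) μH)
    (hh : Integrable (fun x : ℝ => x) μh) (m : Fin N → Bool) :
    Integrable (fun ω : (Fin N → ℝ) × (Fin N → ℝ) × (Fin N → ℝ) × (Fin N → ℝ) =>
      Real.log (chainZt N β ω.1 ω.2.1 ω.2.2.1 ω.2.2.2 m))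
      ((Measure.pi fun _ : Fin N => μJ).prod ((Measure.pi fun _ : Fin N => μH).prod
        ((Measure.pi fun _ : Fin N => μh).prod (Measure.pi fun _ : Fin N => μh)))) := by
  classical
  set μb := ((Measure.pi fun _ : Fin N => μJ).prod ((Measure.pi fun _ : Fin N => μH).prod
      ((Measure.pi fun _ : Fin N => μh).prod (Measure.pi fun _ : Fin N => μh)))) with hμb
  have mpfst : ∀ {α' β' : Type} [MeasurableSpace α'] [MeasurableSpace β']
      (μ' : Measure α') (ν' : Measure β') [IsProbabilityMeasure μ'] [IsProbabilityMeasure ν'],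
      MeasurePreserving Prod.fst (μ'.prod ν') μ' := by
    intro α' β' _ _ μ' ν' _ _
    exact ⟨measurable_fst, by simp⟩
  have mpsnd : ∀ {α' β' : Type} [MeasurableSpace α'] [MeasurableSpace β']
      (μ' : Measure α') (ν' : Measure β') [IsProbabilityMeasure μ'] [IsProbabilityMeasure ν'],
      MeasurePreserving Prod.snd (μ'.prod ν') ν' := by
    intro α' β' _ _ μ' ν' _ _
    exact ⟨measurable_snd, by simp⟩
  have key : ∀ (ν : Measure ℝ) (p : (Fin N → ℝ) × (Fin N → ℝ) × (Fin N → ℝ) × (Fin N → ℝ) → ℝ),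
      MeasurePreserving p μb ν → Integrable (fun x : ℝ => x) ν →
      Integrable (fun ω => |p ω|) μb := by
    intro ν p hp hvi
    exact (hp.integrable_comp continuous_abs.aestronglyMeasurable).2 hvi.abs
  have hJi : ∀ i : Fin N, Integrable (fun ω : (Fin N → ℝ) × (Fin N → ℝ) ×
      (Fin N → ℝ) × (Fin N → ℝ) => |ω.1 i|) μb := fun i =>
    key _ _ ((measurePreserving_eval_pi μJ i).comp (mpfst _ _)) hJ
  have hHi : ∀ i : Fin N, Integrable (fun ω : (Fin N → ℝ) × (Fin N → ℝ) ×
      (Fin N → ℝ) × (Fin N → ℝ) => |ω.2.1 i|) μb := fun i =>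
    key _ _ ((measurePreserving_eval_pi μH i).comp ((mpfst _ _).comp (mpsnd _ _))) hH
  have hh1i : ∀ i : Fin N, Integrable (fun ω : (Fin N → ℝ) × (Fin N → ℝ) ×
      (Fin N → ℝ) × (Fin N → ℝ) => |ω.2.2.1 i|) μb := fun i =>
    key _ _ ((measurePreserving_eval_pi μh i).comp
      ((mpfst _ _).comp ((mpsnd _ _).comp (mpsnd _ _)))) hh
  have hh2i : ∀ i : Fin N, Integrable (fun ω : (Fin N → ℝ) × (Fin N → ℝ) ×
      (Fin N → ℝ) × (Fin N → ℝ) => |ω.2.2.2 i|) μb := fun i =>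
    key _ _ ((measurePreserving_eval_pi μh i).comp
      ((mpsnd _ _).comp ((mpsnd _ _).comp (mpsnd _ _)))) hh
  have hBint : Integrable (fun ω : (Fin N → ℝ) × (Fin N → ℝ) × (Fin N → ℝ) × (Fin N → ℝ) =>
      ∑ i, (|ω.1 i| + |ω.2.1 i| + |ω.2.2.1 i| + |ω.2.2.2 i|)) μb := by
    refine integrable_finset_sum _ fun i _ => ?_
    exact (((hJi i).add (hHi i)).add (hh1i i)).add (hh2i i)
  have hcont : Continuous (fun ω : (Fin N → ℝ) × (Fin N → ℝ) × (Fin N → ℝ) × (Fin N → ℝ) =>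
      chainZt N β ω.1 ω.2.1 ω.2.2.1 ω.2.2.2 m) := by
    unfold chainZt
    refine continuous_finset_sum _ fun σ _ => Real.continuous_exp.comp ?_
    refine Continuous.mul continuous_const (Continuous.add ?_ ?_)
    · refine continuous_finset_sum _ fun i _ => ?_
      by_cases h : m i = true
      · simp only [if_pos h]; fun_prop
      · simp only [if_neg h]; fun_prop
    · exact continuous_finset_sum _ fun i _ => by fun_prop
  refine Integrable.mono' ((integrable_const (Real.log (Fintype.card (Fin N → Bool) : ℝ))).add
    (hBint.const_mul β)) ((Real.measurable_log.comp hcont.measurable).aestronglyMeasurable) ?_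
  refine Filter.Eventually.of_forall fun ω => ?_
  rw [Real.norm_eq_abs]
  exact abs_log_chainZt_le β hβ ω.1 ω.2.1 ω.2.2.1 ω.2.2.2 m

end Aux

theorem chain_interpolation_deriv (β : ℝ) (hβ : 0 < β) (μJ μH μh : Measure ℝ)
    [IsProbabilityMeasure μJ] [IsProbabilityMeasure μH] [IsProbabilityMeasure μh]
    (hsym : Measure.map (fun x : ℝ => -x) μJ = μJ)
    (hJ : Integrable (fun x : ℝ => x) μJ) (hH : Integrable (fun x : ℝ => x) μH)
    (hh : Integrable (fun x : ℝ => x) μh) :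
    ∀ N : ℕ, 2 ≤ N → ∀ t ∈ Set.Icc (0:ℝ) 1,
      deriv (chainFt β μJ μH μh N) t =
        -(1 / (β * N)) * ∑ i : Fin N,
          ∫ ω : (Fin N → ℝ) × (Fin N → ℝ) × (Fin N → ℝ) × (Fin N → ℝ),
            ∑ m : Fin N → Bool, (∏ j : Fin N, bern t (m j)) *
              Real.log
                (chainCutAvg N β ω.1 ω.2.1 ω.2.2.1 ω.2.2.2 m i
                    (fun σ => Real.exp (β * (ω.1 i * spin (σ i) * spin (σ (nxt i))))) /
                  chainCutAvg N β ω.1 ω.2.1 ω.2.2.1 ω.2.2.2 m i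
                    (fun σ => Real.exp (β * (ω.2.2.1 i * spin (σ i) +
                      ω.2.2.2 i * spin (σ (nxt i))))))
          ∂((Measure.pi fun _ : Fin N => μJ).prod ((Measure.pi fun _ : Fin N => μH).prod
            ((Measure.pi fun _ : Fin N => μh).prod (Measure.pi fun _ : Fin N => μh)))) := by
  classical
  intro N hN t ht
  set μb := ((Measure.pi fun _ : Fin N => μJ).prod ((Measure.pi fun _ : Fin N => μH).prod
      ((Measure.pi fun _ : Fin N => μh).prod (Measure.pi fun _ : Fin N => μh)))) with hμb
  have hInt : ∀ m : Fin N → Bool, Integrable (fun ω : (Fin N → ℝ) × (Fin N → ℝ) ×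
      (Fin N → ℝ) × (Fin N → ℝ) => Real.log (chainZt N β ω.1 ω.2.1 ω.2.2.1 ω.2.2.2 m)) μb :=
    fun m => integrable_log_chainZt β hβ.le μJ μH μh hJ hH hh m
  set C : (Fin N → Bool) → ℝ := fun m =>
    ∫ ω, Real.log (chainZt N β ω.1 ω.2.1 ω.2.2.1 ω.2.2.2 m) ∂μb with hC
  have hFt : chainFt β μJ μH μh N = fun s : ℝ =>
      -(1 / (β * N)) * ∑ m : Fin N → Bool, (∏ j, bern s (m j)) * C m := by
    funext s
    unfold chainFt
    rw [← hμb]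
    congr 1
    rw [integral_finset_sum _ (fun m _ => (hInt m).const_mul _)]
    exact Finset.sum_congr rfl fun m _ => integral_const_mul _ _
  have hD : HasDerivAt (fun s : ℝ =>
      -(1 / (β * N)) * ∑ m : Fin N → Bool, (∏ j, bern s (m j)) * C m)
      (-(1 / (β * N)) * ∑ m : Fin N → Bool,
        (∑ i : Fin N, (∏ j ∈ Finset.univ.erase i, bern t (m j)) *
          (if m i then (1:ℝ) else -1)) * C m) t := by
    refine HasDerivAt.const_mul _ (HasDerivAt.fun_sum fun m _ => HasDerivAt.mul_const ?_ (C m))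
    have h := HasDerivAt.fun_finsetProd (u := Finset.univ)
      (f := fun (j : Fin N) (s : ℝ) => bern s (m j))
      (f' := fun j => if m j then (1:ℝ) else -1) (x := t)
      (fun j _ => hasDerivAt_bern (m j) t)
    simpa [smul_eq_mul] using h
  rw [hFt, hD.deriv]
  congr 1
  simp_rw [Finset.sum_mul]
  rw [Finset.sum_comm]
  refine Finset.sum_congr rfl fun i _ => ?_
  have hlog : (fun ω : (Fin N → ℝ) × (Fin N → ℝ) × (Fin N → ℝ) × (Fin N → ℝ) =>
      ∑ m : Fin N → Bool, (∏ j : Fin N, bern t (m j)) *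
        Real.log
          (chainCutAvg N β ω.1 ω.2.1 ω.2.2.1 ω.2.2.2 m i
              (fun σ => Real.exp (β * (ω.1 i * spin (σ i) * spin (σ (nxt i))))) /
            chainCutAvg N β ω.1 ω.2.1 ω.2.2.1 ω.2.2.2 m i
              (fun σ => Real.exp (β * (ω.2.2.1 i * spin (σ i) +
                ω.2.2.2 i * spin (σ (nxt i))))))) =
      fun ω : (Fin N → ℝ) × (Fin N → ℝ) × (Fin N → ℝ) × (Fin N → ℝ) =>
        ∑ m : Fin N → Bool, (∏ j : Fin N, bern t (m j)) *
          (Real.log (chainZt N β ω.1 ω.2.1 ω.2.2.1 ω.2.2.2 (Function.update m i true)) -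
            Real.log (chainZt N β ω.1 ω.2.1 ω.2.2.1 ω.2.2.2 (Function.update m i false))) :=
    funext fun ω => Finset.sum_congr rfl fun m _ => by
      rw [log_cut_ratio β ω.1 ω.2.1 ω.2.2.1 ω.2.2.2 m i]
  have hIsum := integral_finset_sum (μ := μb) Finset.univ
    (f := fun (m : Fin N → Bool) (ω : (Fin N → ℝ) × (Fin N → ℝ) × (Fin N → ℝ) × (Fin N → ℝ)) =>
      (∏ j : Fin N, bern t (m j)) *
        (Real.log (chainZt N β ω.1 ω.2.1 ω.2.2.1 ω.2.2.2 (Function.update m i true)) -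
          Real.log (chainZt N β ω.1 ω.2.1 ω.2.2.1 ω.2.2.2 (Function.update m i false))))
    (fun m _ => ((hInt _).sub (hInt _)).const_mul _)
  rw [hlog, hIsum]
  have hterm : ∀ m : Fin N → Bool,
      (∫ ω, (∏ j : Fin N, bern t (m j)) *
        (Real.log (chainZt N β ω.1 ω.2.1 ω.2.2.1 ω.2.2.2 (Function.update m i true)) -
          Real.log (chainZt N β ω.1 ω.2.1 ω.2.2.1 ω.2.2.2 (Function.update m i false))) ∂μb)
      = (∏ j : Fin N, bern t (m j)) *
        (C (Function.update m i true) - C (Function.update m i false)) := fun m => by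
    rw [integral_const_mul, integral_sub (hInt _) (hInt _)]
  rw [Finset.sum_congr rfl fun m _ => hterm m]
  exact sum_bern_update t i C
end

section
/- Let T be a real random variable whose law is symmetric (invariant under x ↦ -x), satisfying |T| < 1 almost surely and E[-log(1-|T|)] < ∞. Let U_1, U_2 be i.i.d. random variables with values in [-1,1] and common law ν_U, let V_1, V_2 be i.i.d. random variables with values in [-1,1] and common law ν_V, and let T, U_1, U_2, V_1, V_2 be mutually independent. Then E[log(1 + T U_1 U_2)] - 2 E[log(1 + T U_1 V_1)] + E[log(1 + T V_1 V_2)] = - Σ_{n=1}^{∞} (1/(2n)) E[T^{2n}] (E[U_1^{2n}] - E[V_1^{2n}])^2, and in particular this quantity is ≤ 0. -/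
open MeasureTheory Real

namespace LogExpAux

lemma abs_log_one_add_le {y : ℝ} (hy : |y| < 1) :
    |Real.log (1 + y)| ≤ -Real.log (1 - |y|) := by
  rcases le_or_gt 0 y with h | h
  · rw [abs_of_nonneg h] at hy ⊢
    have h2 : (0:ℝ) < 1 - y := by linarith
    rw [abs_of_nonneg (Real.log_nonneg (by linarith)), ← Real.log_inv]
    apply Real.log_le_log (by linarith)
    rw [inv_eq_one_div, le_div_iff₀ h2]
    nlinarith
  · rw [abs_of_neg h] at hy ⊢
    have h1 : (0:ℝ) < 1 + y := by linarith
    have : Real.log (1 + y) ≤ 0 := Real.log_nonpos (by linarith) (by linarith)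
    rw [abs_of_nonpos this]
    have : 1 - -y = 1 + y := by ring
    rw [this]

lemma hasSum_log {t u v : ℝ} (ht : |t| < 1) (hu : |u| ≤ 1) (hv : |v| ≤ 1) :
    HasSum (fun n : ℕ => (-1 : ℝ) ^ n * (t * u * v) ^ (n + 1) / (n + 1))
      (Real.log (1 + t * u * v)) := by
  set y := t * u * v with hy
  have hylt : |y| < 1 := by
    have : |y| ≤ |t| := by
      rw [hy, abs_mul, abs_mul]
      calc |t| * |u| * |v| ≤ |t| * 1 * 1 := by
            apply mul_le_mul (mul_le_mul le_rfl hu (abs_nonneg _) (abs_nonneg _)) hv (abs_nonneg _)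
            positivity
        _ = |t| := by ring
    exact lt_of_le_of_lt this ht
  have h := (Real.hasSum_pow_div_log_of_abs_lt_one (x := -y) (by rwa [abs_neg])).neg
  have heq : (fun n : ℕ => -((-y) ^ (n + 1) / (n + 1)))
      = fun n : ℕ => (-1 : ℝ) ^ n * y ^ (n + 1) / (n + 1) := by
    funext n
    rw [neg_pow]
    ring
  rw [heq] at h
  have : - -Real.log (1 - -y) = Real.log (1 + y) := by
    rw [neg_neg, sub_neg_eq_add]
  rwa [this] at h

lemma hasSum_triple (μT ρ₁ ρ₂ : Measure ℝ)
    [IsProbabilityMeasure μT] [IsProbabilityMeasure ρ₁] [IsProbabilityMeasure ρ₂]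
    (hT1 : ∀ᵐ x ∂μT, |x| < 1)
    (hTlog : Integrable (fun x : ℝ => -Real.log (1 - |x|)) μT)
    (h1 : ∀ᵐ x ∂ρ₁, |x| ≤ 1) (h2 : ∀ᵐ x ∂ρ₂, |x| ≤ 1) :
    HasSum (fun n : ℕ => (-1 : ℝ) ^ n / (n + 1) *
        ((∫ x : ℝ, x ^ (n + 1) ∂μT) * ((∫ x : ℝ, x ^ (n + 1) ∂ρ₁) * ∫ x : ℝ, x ^ (n + 1) ∂ρ₂)))
      (∫ ω : ℝ × ℝ × ℝ, Real.log (1 + ω.1 * ω.2.1 * ω.2.2) ∂(μT.prod (ρ₁.prod ρ₂))) := by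
  set μ := μT.prod (ρ₁.prod ρ₂) with hμ
  have haeT : ∀ᵐ ω : ℝ × ℝ × ℝ ∂μ, |ω.1| < 1 :=
    (Measure.quasiMeasurePreserving_fst.tendsto_ae).eventually hT1
  have hae1 : ∀ᵐ ω : ℝ × ℝ × ℝ ∂μ, |ω.2.1| ≤ 1 :=
    ((Measure.quasiMeasurePreserving_fst.comp
      Measure.quasiMeasurePreserving_snd).tendsto_ae).eventually h1
  have hae2 : ∀ᵐ ω : ℝ × ℝ × ℝ ∂μ, |ω.2.2| ≤ 1 :=
    ((Measure.quasiMeasurePreserving_snd.comp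
      Measure.quasiMeasurePreserving_snd).tendsto_ae).eventually h2
  have hDCT := MeasureTheory.hasSum_integral_of_dominated_convergence
    (μ := μ)
    (F := fun (n : ℕ) (ω : ℝ × ℝ × ℝ) => (-1 : ℝ) ^ n * (ω.1 * ω.2.1 * ω.2.2) ^ (n + 1) / (n + 1))
    (f := fun ω : ℝ × ℝ × ℝ => Real.log (1 + ω.1 * ω.2.1 * ω.2.2))
    (bound := fun (n : ℕ) (ω : ℝ × ℝ × ℝ) => |ω.1| ^ (n + 1) / (n + 1))
    (fun n => (((measurable_const.mul (((measurable_fst.mul measurable_snd.fst).mul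
      measurable_snd.snd).pow_const _)).div_const _).aestronglyMeasurable))
    (by
      intro n
      filter_upwards [haeT, hae1, hae2] with ω ht hu hv
      have hy : |ω.1 * ω.2.1 * ω.2.2| ≤ |ω.1| := by
        rw [abs_mul, abs_mul]
        calc |ω.1| * |ω.2.1| * |ω.2.2| ≤ |ω.1| * 1 * 1 := by
              apply mul_le_mul (mul_le_mul le_rfl hu (abs_nonneg _) (abs_nonneg _)) hv
                (abs_nonneg _); positivity
          _ = |ω.1| := by ring
      have : ‖(-1 : ℝ) ^ n * (ω.1 * ω.2.1 * ω.2.2) ^ (n + 1) / (n + 1)‖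
          = |ω.1 * ω.2.1 * ω.2.2| ^ (n + 1) / (n + 1) := by
        rw [Real.norm_eq_abs, abs_div, abs_mul, abs_pow, abs_pow, abs_neg, abs_one, one_pow,
          one_mul, abs_of_nonneg (show (0:ℝ) ≤ (n:ℝ) + 1 by positivity)]
      rw [this]
      apply div_le_div_of_nonneg_right ?_ (by positivity)
      exact pow_le_pow_left₀ (abs_nonneg _) hy _)
    (by
      filter_upwards [haeT] with ω ht
      exact (Real.hasSum_pow_div_log_of_abs_lt_one (x := |ω.1|) (by rwa [abs_abs])).summable)
    (by
      have hint : Integrable (fun ω : ℝ × ℝ × ℝ => -Real.log (1 - |ω.1|)) μ := by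
        have hmp : MeasurePreserving (Prod.fst : ℝ × ℝ × ℝ → ℝ) μ μT :=
          ⟨measurable_fst, by simp [hμ]⟩
        exact (hmp.integrable_comp hTlog.1).mpr hTlog
      apply hint.congr
      filter_upwards [haeT] with ω ht
      exact ((Real.hasSum_pow_div_log_of_abs_lt_one (x := |ω.1|)
        (by rwa [abs_abs])).tsum_eq).symm)
    (by
      filter_upwards [haeT, hae1, hae2] with ω ht hu hv
      exact hasSum_log ht hu hv)
  have heq : (fun n : ℕ => ∫ ω : ℝ × ℝ × ℝ,
      (-1 : ℝ) ^ n * (ω.1 * ω.2.1 * ω.2.2) ^ (n + 1) / (n + 1) ∂μ)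
      = fun n : ℕ => (-1 : ℝ) ^ n / (n + 1) *
        ((∫ x : ℝ, x ^ (n + 1) ∂μT) * ((∫ x : ℝ, x ^ (n + 1) ∂ρ₁) * ∫ x : ℝ, x ^ (n + 1) ∂ρ₂)) := by
    funext n
    have : (fun ω : ℝ × ℝ × ℝ => (-1 : ℝ) ^ n * (ω.1 * ω.2.1 * ω.2.2) ^ (n + 1) / (n + 1))
        = fun ω : ℝ × ℝ × ℝ => ((-1 : ℝ) ^ n / (n + 1)) •
          (ω.1 ^ (n + 1) * (ω.2.1 ^ (n + 1) * ω.2.2 ^ (n + 1))) := by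
      funext ω; simp only [smul_eq_mul]; ring
    rw [this, integral_smul, hμ]
    rw [integral_prod_mul (f := fun x : ℝ => x ^ (n + 1))
      (g := fun p : ℝ × ℝ => p.1 ^ (n + 1) * p.2 ^ (n + 1)),
      integral_prod_mul (f := fun x : ℝ => x ^ (n + 1)) (g := fun x : ℝ => x ^ (n + 1))]
    simp [smul_eq_mul]
  rwa [heq] at hDCT

end LogExpAux

open LogExpAux in
/-- Let `T ~ μT` be symmetric with `|T| < 1` a.s. and `E[-log(1-|T|)] < ∞`, let
`U₁, U₂ ~ μU` and `V₁, V₂ ~ μV` take values in `[-1,1]`, all mutually independent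
(modelled by the product measure with coordinates `ω.1 = T`, `ω.2.1 = U₁`,
`ω.2.2.1 = U₂`, `ω.2.2.2.1 = V₁`, `ω.2.2.2.2 = V₂`). Then
`E[log(1+TU₁U₂)] - 2E[log(1+TU₁V₁)] + E[log(1+TV₁V₂)]
  = -∑_{n≥1} (1/(2n)) E[T^{2n}] (E[U₁^{2n}] - E[V₁^{2n}])²`, which is `≤ 0`. -/
theorem log_expansion_symmetric_bound (μT μU μV : Measure ℝ)
    [IsProbabilityMeasure μT] [IsProbabilityMeasure μU] [IsProbabilityMeasure μV]
    (hsym : Measure.map (fun x : ℝ => -x) μT = μT)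
    (hT1 : ∀ᵐ x ∂μT, |x| < 1)
    (hTlog : Integrable (fun x : ℝ => -Real.log (1 - |x|)) μT)
    (hU : ∀ᵐ x ∂μU, x ∈ Set.Icc (-1 : ℝ) 1)
    (hV : ∀ᵐ x ∂μV, x ∈ Set.Icc (-1 : ℝ) 1) :
    ((∫ ω : ℝ × ℝ × ℝ × ℝ × ℝ, Real.log (1 + ω.1 * ω.2.1 * ω.2.2.1)
        ∂(μT.prod (μU.prod (μU.prod (μV.prod μV)))) -
      2 * ∫ ω : ℝ × ℝ × ℝ × ℝ × ℝ, Real.log (1 + ω.1 * ω.2.1 * ω.2.2.2.1)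
        ∂(μT.prod (μU.prod (μU.prod (μV.prod μV)))) +
      ∫ ω : ℝ × ℝ × ℝ × ℝ × ℝ, Real.log (1 + ω.1 * ω.2.2.2.1 * ω.2.2.2.2)
        ∂(μT.prod (μU.prod (μU.prod (μV.prod μV)))))
      = -∑' n : ℕ, (1 / (2 * ((n : ℝ) + 1))) * (∫ x : ℝ, x ^ (2 * (n + 1)) ∂μT) *
          ((∫ x : ℝ, x ^ (2 * (n + 1)) ∂μU) - ∫ x : ℝ, x ^ (2 * (n + 1)) ∂μV) ^ 2) ∧
    ((∫ ω : ℝ × ℝ × ℝ × ℝ × ℝ, Real.log (1 + ω.1 * ω.2.1 * ω.2.2.1)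
        ∂(μT.prod (μU.prod (μU.prod (μV.prod μV)))) -
      2 * ∫ ω : ℝ × ℝ × ℝ × ℝ × ℝ, Real.log (1 + ω.1 * ω.2.1 * ω.2.2.2.1)
        ∂(μT.prod (μU.prod (μU.prod (μV.prod μV)))) +
      ∫ ω : ℝ × ℝ × ℝ × ℝ × ℝ, Real.log (1 + ω.1 * ω.2.2.2.1 * ω.2.2.2.2)
        ∂(μT.prod (μU.prod (μU.prod (μV.prod μV)))))
      ≤ 0) := by
  have hU' : ∀ᵐ x ∂μU, |x| ≤ 1 := hU.mono fun x hx => abs_le.mpr ⟨hx.1, hx.2⟩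
  have hV' : ∀ᵐ x ∂μV, |x| ≤ 1 := hV.mono fun x hx => abs_le.mpr ⟨hx.1, hx.2⟩
  set ρ := μU.prod (μU.prod (μV.prod μV)) with hρ
  -- odd moments vanish
  have hodd : ∀ k : ℕ, ∫ x : ℝ, x ^ (2 * k + 1) ∂μT = 0 := by
    intro k
    have h1 : ∫ y : ℝ, y ^ (2 * k + 1) ∂(Measure.map (fun x : ℝ => -x) μT)
        = ∫ x : ℝ, (-x) ^ (2 * k + 1) ∂μT :=
      integral_map measurable_neg.aemeasurable
        ((measurable_id.pow_const _).aestronglyMeasurable)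
    rw [hsym] at h1
    have h2 : (fun x : ℝ => (-x) ^ (2 * k + 1)) = fun x : ℝ => -(x ^ (2 * k + 1)) := by
      funext x
      exact Odd.neg_pow ⟨k, by ring⟩ x
    rw [h2, integral_neg] at h1
    linarith
  -- measure map identities
  have mlog : Measurable (fun ω : ℝ × ℝ × ℝ => Real.log (1 + ω.1 * ω.2.1 * ω.2.2)) :=
    Real.measurable_log.comp
      (measurable_const.add ((measurable_fst.mul measurable_snd.fst).mul measurable_snd.snd))
  have m1 : (μT.prod ρ).map (fun ω : ℝ × ℝ × ℝ × ℝ × ℝ => (ω.1, ω.2.1, ω.2.2.1))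
      = μT.prod (μU.prod μU) := by
    have hfn : (fun ω : ℝ × ℝ × ℝ × ℝ × ℝ => (ω.1, ω.2.1, ω.2.2.1))
        = Prod.map (id : ℝ → ℝ) (Prod.map (id : ℝ → ℝ) (Prod.fst : ℝ × ℝ × ℝ → ℝ)) := rfl
    rw [hfn, ← Measure.map_prod_map _ _ measurable_id (measurable_id.prodMap measurable_fst),
      ← Measure.map_prod_map _ _ measurable_id measurable_fst, Measure.map_id, Measure.map_id,
      Measure.map_fst_prod]
    simp
  have m2 : (μT.prod ρ).map (fun ω : ℝ × ℝ × ℝ × ℝ × ℝ => (ω.1, ω.2.1, ω.2.2.2.1))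
      = μT.prod (μU.prod μV) := by
    have hfn : (fun ω : ℝ × ℝ × ℝ × ℝ × ℝ => (ω.1, ω.2.1, ω.2.2.2.1))
        = Prod.map (id : ℝ → ℝ) (Prod.map (id : ℝ → ℝ)
            ((Prod.fst : ℝ × ℝ → ℝ) ∘ (Prod.snd : ℝ × ℝ × ℝ → ℝ × ℝ))) := rfl
    rw [hfn, ← Measure.map_prod_map _ _ measurable_id
        (measurable_id.prodMap (measurable_fst.comp measurable_snd)),
      ← Measure.map_prod_map _ _ measurable_id (measurable_fst.comp measurable_snd),
      Measure.map_id, Measure.map_id,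
      ← Measure.map_map measurable_fst measurable_snd, Measure.map_snd_prod]
    simp
  have m3 : (μT.prod ρ).map (fun ω : ℝ × ℝ × ℝ × ℝ × ℝ => (ω.1, ω.2.2.2.1, ω.2.2.2.2))
      = μT.prod (μV.prod μV) := by
    have hfn : (fun ω : ℝ × ℝ × ℝ × ℝ × ℝ => (ω.1, ω.2.2.2.1, ω.2.2.2.2))
        = Prod.map (id : ℝ → ℝ)
            ((Prod.snd : ℝ × ℝ × ℝ → ℝ × ℝ) ∘ (Prod.snd : ℝ × ℝ × ℝ × ℝ → ℝ × ℝ × ℝ)) := rfl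
    rw [hfn, ← Measure.map_prod_map _ _ measurable_id (measurable_snd.comp measurable_snd),
      Measure.map_id, ← Measure.map_map measurable_snd measurable_snd, Measure.map_snd_prod]
    simp
  -- convert the five-fold integrals to triple integrals
  have I1eq : ∫ ω : ℝ × ℝ × ℝ, Real.log (1 + ω.1 * ω.2.1 * ω.2.2) ∂(μT.prod (μU.prod μU))
      = ∫ ω : ℝ × ℝ × ℝ × ℝ × ℝ, Real.log (1 + ω.1 * ω.2.1 * ω.2.2.1) ∂(μT.prod ρ) := by
    rw [← m1, integral_map (by fun_prop) (m1 ▸ mlog.aestronglyMeasurable)]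
  have I2eq : ∫ ω : ℝ × ℝ × ℝ, Real.log (1 + ω.1 * ω.2.1 * ω.2.2) ∂(μT.prod (μU.prod μV))
      = ∫ ω : ℝ × ℝ × ℝ × ℝ × ℝ, Real.log (1 + ω.1 * ω.2.1 * ω.2.2.2.1) ∂(μT.prod ρ) := by
    rw [← m2, integral_map (by fun_prop) (m2 ▸ mlog.aestronglyMeasurable)]
  have I3eq : ∫ ω : ℝ × ℝ × ℝ, Real.log (1 + ω.1 * ω.2.1 * ω.2.2) ∂(μT.prod (μV.prod μV))
      = ∫ ω : ℝ × ℝ × ℝ × ℝ × ℝ, Real.log (1 + ω.1 * ω.2.2.2.1 * ω.2.2.2.2) ∂(μT.prod ρ) := by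
    rw [← m3, integral_map (by fun_prop) (m3 ▸ mlog.aestronglyMeasurable)]
  have H1 := hasSum_triple μT μU μU hT1 hTlog hU' hU'
  have H2 := hasSum_triple μT μU μV hT1 hTlog hU' hV'
  have H3 := hasSum_triple μT μV μV hT1 hTlog hV' hV'
  rw [I1eq] at H1
  rw [I2eq] at H2
  rw [I3eq] at H3
  have H := (H1.sub (H2.mul_left 2)).add H3
  have hG : (fun n : ℕ =>
      ((-1 : ℝ) ^ n / (n + 1) *
        ((∫ x : ℝ, x ^ (n + 1) ∂μT) * ((∫ x : ℝ, x ^ (n + 1) ∂μU) * ∫ x : ℝ, x ^ (n + 1) ∂μU)) -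
       2 * ((-1 : ℝ) ^ n / (n + 1) *
        ((∫ x : ℝ, x ^ (n + 1) ∂μT) * ((∫ x : ℝ, x ^ (n + 1) ∂μU) * ∫ x : ℝ, x ^ (n + 1) ∂μV)))) +
       (-1 : ℝ) ^ n / (n + 1) *
        ((∫ x : ℝ, x ^ (n + 1) ∂μT) * ((∫ x : ℝ, x ^ (n + 1) ∂μV) * ∫ x : ℝ, x ^ (n + 1) ∂μV)))
      = fun n : ℕ => (-1 : ℝ) ^ n / (n + 1) * (∫ x : ℝ, x ^ (n + 1) ∂μT) *
          ((∫ x : ℝ, x ^ (n + 1) ∂μU) - ∫ x : ℝ, x ^ (n + 1) ∂μV) ^ 2 := by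
    funext n; ring
  rw [hG] at H
  set G := fun n : ℕ => (-1 : ℝ) ^ n / (n + 1) * (∫ x : ℝ, x ^ (n + 1) ∂μT) *
      ((∫ x : ℝ, x ^ (n + 1) ∂μU) - ∫ x : ℝ, x ^ (n + 1) ∂μV) ^ 2 with hGdef
  have hg_inj : Function.Injective (fun j : ℕ => 2 * j + 1) := fun a b h => by simp only [] at h; omega
  have hvanish : ∀ m ∉ Set.range (fun j : ℕ => 2 * j + 1), G m = 0 := by
    intro m hm
    have hme : Even m := by
      rcases Nat.even_or_odd m with he | ho
      · exact he
      · obtain ⟨j, hj⟩ := ho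
        exact absurd ⟨j, hj.symm⟩ hm
    obtain ⟨k, hk⟩ := hme
    have hmk : m = 2 * k := by omega
    rw [hGdef]
    simp only [hmk, hodd k, mul_zero, zero_mul]
  have H' := (Function.Injective.hasSum_iff hg_inj hvanish).mpr H
  have hcomp : (G ∘ fun j : ℕ => 2 * j + 1)
      = fun j : ℕ => -((1 / (2 * ((j : ℝ) + 1))) * (∫ x : ℝ, x ^ (2 * (j + 1)) ∂μT) *
          ((∫ x : ℝ, x ^ (2 * (j + 1)) ∂μU) - ∫ x : ℝ, x ^ (2 * (j + 1)) ∂μV) ^ 2) := by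
    funext j
    have he : 2 * j + 1 + 1 = 2 * (j + 1) := by ring
    have hsign : (-1 : ℝ) ^ (2 * j + 1) = -1 := Odd.neg_one_pow ⟨j, by ring⟩
    have hcast : ((2 * j + 1 : ℕ) : ℝ) + 1 = 2 * ((j : ℝ) + 1) := by push_cast; ring
    simp only [Function.comp, hGdef, he, hsign, hcast]
    ring
  rw [hcomp] at H'
  have H'' := H'.neg
  simp only [neg_neg] at H''
  have hts := H''.tsum_eq
  have hS : (∫ ω : ℝ × ℝ × ℝ × ℝ × ℝ, Real.log (1 + ω.1 * ω.2.1 * ω.2.2.1) ∂(μT.prod ρ) -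
      2 * ∫ ω : ℝ × ℝ × ℝ × ℝ × ℝ, Real.log (1 + ω.1 * ω.2.1 * ω.2.2.2.1) ∂(μT.prod ρ) +
      ∫ ω : ℝ × ℝ × ℝ × ℝ × ℝ, Real.log (1 + ω.1 * ω.2.2.2.1 * ω.2.2.2.2) ∂(μT.prod ρ))
      = -∑' n : ℕ, (1 / (2 * ((n : ℝ) + 1))) * (∫ x : ℝ, x ^ (2 * (n + 1)) ∂μT) *
          ((∫ x : ℝ, x ^ (2 * (n + 1)) ∂μU) - ∫ x : ℝ, x ^ (2 * (n + 1)) ∂μV) ^ 2 := by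
    rw [hts]; ring
  refine ⟨hS, ?_⟩
  rw [hS]
  have htnn : 0 ≤ ∑' n : ℕ, (1 / (2 * ((n : ℝ) + 1))) * (∫ x : ℝ, x ^ (2 * (n + 1)) ∂μT) *
      ((∫ x : ℝ, x ^ (2 * (n + 1)) ∂μU) - ∫ x : ℝ, x ^ (2 * (n + 1)) ∂μV) ^ 2 := by
    apply tsum_nonneg
    intro j
    have hτ : 0 ≤ ∫ x : ℝ, x ^ (2 * (j + 1)) ∂μT :=
      integral_nonneg fun x => by
        rw [pow_mul]
        exact pow_nonneg (sq_nonneg x) _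
    exact mul_nonneg (mul_nonneg (by positivity) hτ) (sq_nonneg _)
  linarith
end

section
/- Let β > 0 and let s, L, K_1, K_2, L' be real numbers. Define ŝ = (1/β)·artanh(tanh(βK_1)·tanh(βK_2)·tanh(β(s+L))). Then Σ_{σ_1, σ_2, τ_1, τ_2 ∈ {-1,1}} exp(β(s+L)σ_1σ_2 + βK_1σ_1τ_1 + βK_2σ_2τ_2 + βL'τ_1τ_2) = 16 cosh(β(s+L)) cosh(βK_1) cosh(βK_2) cosh(β(ŝ+L')) / cosh(βŝ). -/
open Real

lemma abs_tanh_lt_one (x : ℝ) : |Real.tanh x| < 1 := by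
  have h1 : 0 < Real.exp x := Real.exp_pos x
  have h2 : 0 < Real.exp (-x) := Real.exp_pos (-x)
  rw [Real.tanh_eq_sinh_div_cosh, Real.sinh_eq, Real.cosh_eq, abs_lt]
  constructor
  · rw [lt_div_iff₀ (by positivity)]; linarith
  · rw [div_lt_one (by positivity)]; linarith

lemma tanh_artanh {t : ℝ} (h : |t| < 1) : Real.tanh (_root_.artanh t) = t := by
  obtain ⟨h1, h2⟩ := abs_lt.mp h
  have hr : (0:ℝ) < (1+t)/(1-t) := div_pos (by linarith) (by linarith)
  rw [Real.tanh_eq_sinh_div_cosh, Real.sinh_eq, Real.cosh_eq, _root_.artanh]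
  set E := Real.exp (Real.log ((1+t)/(1-t)) / 2) with hE
  have hEpos : 0 < E := Real.exp_pos _
  have hE2 : E * E = (1+t)/(1-t) := by
    rw [hE, ← Real.exp_add]
    rw [show Real.log ((1+t)/(1-t)) / 2 + Real.log ((1+t)/(1-t)) / 2
        = Real.log ((1+t)/(1-t)) by ring]
    exact Real.exp_log hr
  have hneg : Real.exp (-(Real.log ((1+t)/(1-t)) / 2)) = E⁻¹ := by
    rw [Real.exp_neg]
  rw [hneg]
  have h1t : (1:ℝ) - t ≠ 0 := by linarith
  have key : E * E - 1 = t * (E * E + 1) := by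
    have h3 : E * E * (1 - t) = 1 + t := by rw [hE2]; field_simp
    nlinarith [h3]
  field_simp
  linarith [key]

set_option maxHeartbeats 2000000 in
/-- Single-rung cavity recursion for the Ising model on a two-leg ladder: summing out the
two spins `σ₁, σ₂` of the boundary rung of a ladder with cavity coupling `s`, rung
coupling `L`, leg couplings `K₁, K₂` and next rung coupling `L'` produces the new cavity
coupling `ŝ = (1/β)·artanh(tanh(βK₁)·tanh(βK₂)·tanh(β(s+L)))` and the stated
multiplicative factor. -/
theorem ladder_cavity_recursion (β s L K1 K2 L' shat : ℝ) (hβ : 0 < β)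
    (hshat : shat = (1 / β) *
      _root_.artanh (Real.tanh (β * K1) * Real.tanh (β * K2) * Real.tanh (β * (s + L)))) :
    ∑ σ1 : Bool, ∑ σ2 : Bool, ∑ τ1 : Bool, ∑ τ2 : Bool,
      Real.exp (β * (s + L) * spin σ1 * spin σ2 + β * K1 * spin σ1 * spin τ1 +
        β * K2 * spin σ2 * spin τ2 + β * L' * spin τ1 * spin τ2) =
    16 * Real.cosh (β * (s + L)) * Real.cosh (β * K1) * Real.cosh (β * K2) *
      Real.cosh (β * (shat + L')) / Real.cosh (β * shat) := by
  set t := Real.tanh (β * K1) * Real.tanh (β * K2) * Real.tanh (β * (s + L)) with ht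
  have habs : |t| < 1 := by
    rw [ht, abs_mul, abs_mul]
    have a1 := _root_.abs_tanh_lt_one (β * K1)
    have a2 := _root_.abs_tanh_lt_one (β * K2)
    have a3 := _root_.abs_tanh_lt_one (β * (s + L))
    have n1 := abs_nonneg (Real.tanh (β * K1))
    have n2 := abs_nonneg (Real.tanh (β * K2))
    have n3 := abs_nonneg (Real.tanh (β * (s + L)))
    calc |Real.tanh (β * K1)| * |Real.tanh (β * K2)| * |Real.tanh (β * (s + L))|
        ≤ 1 * 1 * |Real.tanh (β * (s + L))| := by gcongr <;> linarith
      _ = |Real.tanh (β * (s + L))| := by ring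
      _ < 1 := a3
  have hβs : β * shat = _root_.artanh t := by
    rw [hshat]; field_simp
  have htt : Real.tanh (β * shat) = t := by rw [hβs]; exact tanh_artanh habs
  have hCS : Real.cosh (β * shat) ≠ 0 := ne_of_gt (Real.cosh_pos _)
  have hC1 : Real.cosh (β * K1) ≠ 0 := ne_of_gt (Real.cosh_pos _)
  have hC2 : Real.cosh (β * K2) ≠ 0 := ne_of_gt (Real.cosh_pos _)
  have hCA : Real.cosh (β * (s + L)) ≠ 0 := ne_of_gt (Real.cosh_pos _)
  have hSS : Real.sinh (β * shat) = t * Real.cosh (β * shat) := by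
    rw [← htt, Real.tanh_eq_sinh_div_cosh]; field_simp
  have hrhs : 16 * Real.cosh (β * (s + L)) * Real.cosh (β * K1) * Real.cosh (β * K2) *
      Real.cosh (β * (shat + L')) / Real.cosh (β * shat) =
      16 * (Real.cosh (β * (s + L)) * Real.cosh (β * K1) * Real.cosh (β * K2) *
        Real.cosh (β * L') + Real.sinh (β * (s + L)) * Real.sinh (β * K1) *
        Real.sinh (β * K2) * Real.sinh (β * L')) := by
    rw [show β * (shat + L') = β * shat + β * L' by ring, Real.cosh_add, hSS, ht]
    rw [Real.tanh_eq_sinh_div_cosh, Real.tanh_eq_sinh_div_cosh, Real.tanh_eq_sinh_div_cosh]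
    field_simp
  rw [hrhs]
  simp only [Fintype.sum_bool, spin, Bool.false_eq_true, if_true, if_false, mul_one,
    mul_neg_one, mul_neg, neg_neg]
  rw [Real.cosh_eq, Real.cosh_eq, Real.cosh_eq, Real.cosh_eq,
    Real.sinh_eq, Real.sinh_eq, Real.sinh_eq, Real.sinh_eq]
  simp only [Real.exp_add, Real.exp_neg]
  obtain ⟨a, hpa, hA⟩ : ∃ a, 0 < a ∧ Real.exp (β * (s + L)) = a := ⟨_, Real.exp_pos _, rfl⟩
  obtain ⟨b, hpb, hB⟩ : ∃ b, 0 < b ∧ Real.exp (β * K1) = b := ⟨_, Real.exp_pos _, rfl⟩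
  obtain ⟨c, hpc, hC⟩ : ∃ c, 0 < c ∧ Real.exp (β * K2) = c := ⟨_, Real.exp_pos _, rfl⟩
  obtain ⟨d, hpd, hD⟩ : ∃ d, 0 < d ∧ Real.exp (β * L') = d := ⟨_, Real.exp_pos _, rfl⟩
  rw [hA, hB, hC, hD]
  field_simp
  ring
end
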